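/- arXiv:math/0607310 — 3 statements merged into one kernel-verified Lean document; each statement's English description precedes it below -/
import Mathlib

section
/- Let $0 \le a < b$, set $c = \tfrac{a+b}{2}$, and let $\beta \in (0,1)$ and $K_\beta > 0$. Let $\Upsilon : [a,b] \times [a,b] \to \mathbb{R}$ be measurable and nonnegative, such that for every $\eta \in [a,b]$ the map $\lambda \mapsto \Upsilon(\eta,\lambda)$ is $\beta$-H\"older continuous with constant $K_\beta$, and such that $\eta \mapsto \Upsilon(\eta,\eta)$ is integrable on $[a,b]$. Then $\int_a^b \left( \int_\eta^b \Upsilon(\eta,u)\,du \right) d\eta \;\ge\; \frac{b-a}{2} \int_a^c \Upsilon(\eta,\eta)\,d\eta \;-\; K_\beta (b-a)^{\beta+2}.$ -/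
open MeasureTheory

theorem stmt_1 (a b β Kβ : ℝ) (ha : 0 ≤ a) (hab : a < b)
    (hβ : β ∈ Set.Ioo (0:ℝ) 1) (hK : 0 < Kβ) (Υ : ℝ → ℝ → ℝ)
    (hmeas : Measurable (Function.uncurry Υ))
    (hnonneg : ∀ η ∈ Set.Icc a b, ∀ lam ∈ Set.Icc a b, 0 ≤ Υ η lam)
    (hholder : ∀ η ∈ Set.Icc a b, ∀ x ∈ Set.Icc a b, ∀ y ∈ Set.Icc a b,
      |Υ η x - Υ η y| ≤ Kβ * |x - y| ^ β)
    (hdiag : IntegrableOn (fun η => Υ η η) (Set.Icc a b)) :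
    (b - a) / 2 * (∫ η in a..((a + b) / 2), Υ η η) - Kβ * (b - a) ^ (β + 2) ≤
      ∫ η in a..b, (∫ u in η..b, Υ η u) := by
  obtain ⟨hβ0, hβ1⟩ := hβ
  set c : ℝ := (a + b) / 2 with hc
  have hac : a < c := by rw [hc]; linarith
  have hcb : c < b := by rw [hc]; linarith
  have hba : (0:ℝ) < b - a := by linarith
  set M : ℝ := Kβ * (b - a) ^ β with hM
  have hMpos : 0 ≤ M := mul_nonneg hK.le (Real.rpow_nonneg hba.le β)
  -- continuity of slices
  have hcont : ∀ η ∈ Set.Icc a b, ContinuousOn (Υ η) (Set.Icc a b) := by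
    intro η hη x hx
    rw [ContinuousWithinAt, tendsto_iff_dist_tendsto_zero]
    have h1 : Filter.Tendsto (fun y : ℝ => |y - x|) (nhdsWithin x (Set.Icc a b)) (nhds 0) := by
      have hcc : Continuous fun y : ℝ => |y - x| := (continuous_id.sub continuous_const).abs
      have := (hcc.tendsto x).mono_left (nhdsWithin_le_nhds (s := Set.Icc a b))
      simpa using this
    have h2 : Filter.Tendsto (fun t : ℝ => Kβ * t ^ β) (nhds 0) (nhds 0) := by
      have hc2 : ContinuousAt (fun t : ℝ => t ^ β) 0 :=
        Real.continuousAt_rpow_const 0 β (Or.inr hβ0.le)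
      have h3 : Filter.Tendsto (fun t : ℝ => Kβ * t ^ β) (nhds 0) (nhds (Kβ * (0:ℝ) ^ β)) :=
        hc2.tendsto.const_mul Kβ
      rw [Real.zero_rpow hβ0.ne', mul_zero] at h3
      exact h3
    refine squeeze_zero' (Filter.Eventually.of_forall fun y => dist_nonneg) ?_ (h2.comp h1)
    filter_upwards [self_mem_nhdsWithin] with y hy
    have := hholder η hη y hy x hx
    simpa [Real.dist_eq] using this
  -- Hölder bounds
  have hbound : ∀ η ∈ Set.Icc a b, ∀ u ∈ Set.Icc a b,
      Υ η η - M ≤ Υ η u ∧ Υ η u ≤ Υ η η + M := by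
    intro η hη u hu
    have h := hholder η hη u hu η hη
    have habs : Kβ * |u - η| ^ β ≤ M := by
      rw [hM]
      have h1 : |u - η| ≤ b - a := by
        rw [abs_sub_le_iff]
        constructor <;> [skip; skip] <;>
          · obtain ⟨h2, h3⟩ := hη; obtain ⟨h4, h5⟩ := hu; linarith
      exact mul_le_mul_of_nonneg_left
        (Real.rpow_le_rpow (abs_nonneg _) h1 hβ0.le) hK.le
    have := (abs_sub_le_iff.mp (h.trans habs))
    constructor <;> linarith [this.1, this.2]
  -- inner interval integrability
  have hii : ∀ η ∈ Set.Icc a b, IntervalIntegrable (Υ η) volume η b := by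
    intro η hη
    refine ((hcont η hη).mono ?_).intervalIntegrable
    rw [Set.uIcc_of_le hη.2]
    exact Set.Icc_subset_Icc hη.1 le_rfl
  set F : ℝ → ℝ := fun η => ∫ u in η..b, Υ η u with hF
  -- F nonneg
  have hFnonneg : ∀ η ∈ Set.Icc a b, 0 ≤ F η := by
    intro η hη
    apply intervalIntegral.integral_nonneg hη.2
    intro u hu
    exact hnonneg η hη u ⟨hη.1.trans hu.1, hu.2⟩
  -- F upper bound
  have hFub : ∀ η ∈ Set.Icc a b, F η ≤ (b - a) * (Υ η η + M) := by
    intro η hη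
    have h1 : F η ≤ ∫ _u in η..b, (Υ η η + M) := by
      apply intervalIntegral.integral_mono_on hη.2 (hii η hη)
        intervalIntegrable_const
      intro u hu
      exact (hbound η hη u ⟨hη.1.trans hu.1, hu.2⟩).2
    rw [intervalIntegral.integral_const, smul_eq_mul] at h1
    refine h1.trans ?_
    have h2 : 0 ≤ Υ η η + M := by
      have := hnonneg η hη η hη; linarith
    have h3 : b - η ≤ b - a := by linarith [hη.1]
    exact mul_le_mul_of_nonneg_right h3 h2
  -- F lower bound on [a, c]
  have hFlb : ∀ η ∈ Set.Icc a c, (b - a) / 2 * Υ η η - (b - a) / 2 * M ≤ F η := by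
    intro η hη
    have hη' : η ∈ Set.Icc a b := ⟨hη.1, hη.2.trans hcb.le⟩
    have h1 : (∫ _u in η..b, max (Υ η η - M) 0) ≤ F η := by
      apply intervalIntegral.integral_mono_on hη'.2 intervalIntegrable_const (hii η hη')
      intro u hu
      have hu' : u ∈ Set.Icc a b := ⟨hη'.1.trans hu.1, hu.2⟩
      exact max_le (hbound η hη' u hu').1 (hnonneg η hη' u hu')
    rw [intervalIntegral.integral_const, smul_eq_mul] at h1
    refine le_trans ?_ h1
    have h2 : (b - a) / 2 ≤ b - η := by
      have := hη.2; rw [hc] at this; linarith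
    calc (b - a) / 2 * Υ η η - (b - a) / 2 * M
        = (b - a) / 2 * (Υ η η - M) := by ring
      _ ≤ (b - a) / 2 * max (Υ η η - M) 0 :=
          mul_le_mul_of_nonneg_left (le_max_left _ _) (by linarith)
      _ ≤ (b - η) * max (Υ η η - M) 0 :=
          mul_le_mul_of_nonneg_right h2 (le_max_right _ _)
  -- measurability of F via indicator representation
  set G : ℝ → ℝ := fun η => ∫ u, (Set.Ioc η b).indicator (Υ η) u with hG
  have hGmeas : StronglyMeasurable G := by
    have hset : MeasurableSet {p : ℝ × ℝ | p.1 < p.2 ∧ p.2 ≤ b} :=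
      (measurableSet_lt measurable_fst measurable_snd).inter
        (measurable_snd measurableSet_Iic)
    have hind : Measurable fun p : ℝ × ℝ =>
        Set.indicator {p : ℝ × ℝ | p.1 < p.2 ∧ p.2 ≤ b} (Function.uncurry Υ) p :=
      hmeas.indicator hset
    have := hind.stronglyMeasurable.integral_prod_right' (ν := volume)
    convert this using 2 with η
    show (∫ u, (Set.Ioc η b).indicator (Υ η) u) = _
    congr 1
  have hFG : ∀ η ∈ Set.Icc a b, F η = G η := by
    intro η hη
    show (∫ u in η..b, Υ η u) = ∫ u, (Set.Ioc η b).indicator (Υ η) u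
    rw [intervalIntegral.integral_of_le hη.2,
      MeasureTheory.integral_indicator measurableSet_Ioc]
  -- integrability of F on Icc a b
  have hDint : IntegrableOn (fun η => (b - a) * (Υ η η + M)) (Set.Icc a b) :=
    ((hdiag.add (integrableOn_const measure_Icc_lt_top.ne)).const_mul (b - a))
  have hFint : IntegrableOn F (Set.Icc a b) := by
    apply Integrable.mono hDint
    · refine (hGmeas.aestronglyMeasurable.restrict).congr ?_
      filter_upwards [ae_restrict_mem measurableSet_Icc] with η hη
      exact (hFG η hη).symm
    · filter_upwards [ae_restrict_mem measurableSet_Icc] with η hη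
      rw [Real.norm_eq_abs, Real.norm_eq_abs, abs_of_nonneg (hFnonneg η hη)]
      refine (hFub η hη).trans (le_abs_self _)
  have hFint' : IntervalIntegrable F volume a b := by
    rw [intervalIntegrable_iff_integrableOn_Ioc_of_le hab.le]
    exact hFint.mono_set Set.Ioc_subset_Icc_self
  have hFac : IntervalIntegrable F volume a c := by
    apply hFint'.mono_set
    rw [Set.uIcc_of_le hac.le, Set.uIcc_of_le hab.le]
    exact Set.Icc_subset_Icc le_rfl hcb.le
  have hFcb : IntervalIntegrable F volume c b := by
    apply hFint'.mono_set
    rw [Set.uIcc_of_le hcb.le, Set.uIcc_of_le hab.le]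
    exact Set.Icc_subset_Icc hac.le le_rfl
  -- lower bound function integrability on [a,c]
  have hdiag_ac : IntervalIntegrable (fun η => Υ η η) volume a c := by
    rw [intervalIntegrable_iff_integrableOn_Ioc_of_le hac.le]
    exact (hdiag.mono_set (Set.Icc_subset_Icc le_rfl hcb.le)).mono_set
      Set.Ioc_subset_Icc_self
  have hLint : IntervalIntegrable
      (fun η => (b - a) / 2 * Υ η η - (b - a) / 2 * M) volume a c :=
    (hdiag_ac.const_mul _).sub intervalIntegrable_const
  -- assemble
  have hsplit : (∫ η in a..c, F η) + (∫ η in c..b, F η) = ∫ η in a..b, F η :=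
    intervalIntegral.integral_add_adjacent_intervals hFac hFcb
  have hcbnn : 0 ≤ ∫ η in c..b, F η := by
    apply intervalIntegral.integral_nonneg hcb.le
    intro η hη
    exact hFnonneg η ⟨hac.le.trans hη.1, hη.2⟩
  have hmain : (∫ η in a..c, (fun η => (b - a) / 2 * Υ η η - (b - a) / 2 * M) η)
      ≤ ∫ η in a..c, F η := by
    apply intervalIntegral.integral_mono_on hac.le hLint hFac
    intro η hη
    exact hFlb η hη
  have hcalc : (∫ η in a..c, ((b - a) / 2 * Υ η η - (b - a) / 2 * M))
      = (b - a) / 2 * (∫ η in a..c, Υ η η) - (b - a) / 2 * M * (c - a) := by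
    rw [intervalIntegral.integral_sub (hdiag_ac.const_mul _) intervalIntegrable_const,
      intervalIntegral.integral_const_mul, intervalIntegral.integral_const,
      smul_eq_mul]
    ring
  have hrpow : Kβ * (b - a) ^ (β + 2) = M * (b - a) ^ 2 := by
    have h2 : (b - a) ^ ((2:ℕ):ℝ) = (b - a) ^ (2:ℕ) := Real.rpow_natCast _ 2
    rw [hM, Real.rpow_add hba, show (2:ℝ) = ((2:ℕ):ℝ) by norm_num, h2]
    ring
  have hfinal : (b - a) / 2 * (∫ η in a..c, Υ η η) - Kβ * (b - a) ^ (β + 2)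
      ≤ (b - a) / 2 * (∫ η in a..c, Υ η η) - (b - a) / 2 * M * (c - a) := by
    rw [hrpow]
    have hca : c - a = (b - a) / 2 := by rw [hc]; ring
    rw [hca]
    have : (b - a) / 2 * M * ((b - a) / 2) ≤ M * (b - a) ^ 2 := by
      nlinarith [sq_nonneg (b - a), hMpos, hba]
    linarith
  calc (b - a) / 2 * (∫ η in a..c, Υ η η) - Kβ * (b - a) ^ (β + 2)
      ≤ (b - a) / 2 * (∫ η in a..c, Υ η η) - (b - a) / 2 * M * (c - a) := hfinal
    _ = ∫ η in a..c, ((b - a) / 2 * Υ η η - (b - a) / 2 * M) := hcalc.symm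
    _ ≤ ∫ η in a..c, F η := hmain
    _ ≤ (∫ η in a..c, F η) + (∫ η in c..b, F η) := le_add_of_nonneg_right hcbnn
    _ = ∫ η in a..b, F η := hsplit
end

section
/- Let $s > 0$, $\beta \in (0,1)$, $K_\beta > 0$, $\alpha_2 > 0$, and let $\nu > 0$ satisfy $\nu \beta > 1$. Set $\varepsilon_0 = 2^{-1/\nu}$ and $\varepsilon_1 = \left( \frac{\alpha_2}{K_\beta\, 4^{\beta+3} s^{\beta+1}} \right)^{1/(\nu\beta - 1)}$. Let $0 < \varepsilon < \min(\varepsilon_0, \varepsilon_1)$, set $n = \lfloor \varepsilon^{-\nu} \rfloor$ and $s_i = \tfrac{i s}{n}$, and fix $i \in \{0, \dots, n-2\}$. Let $\Upsilon : [0,s] \times [0,s] \to \mathbb{R}$ be measurable, nonnegative, with $\lambda \mapsto \Upsilon(\eta,\lambda)$ $\beta$-H\"older continuous with constant $K_\beta$ for every $\eta$, with integrable diagonal, and suppose $\int_{s_i}^{s_{i+1}} \Upsilon(\eta,\eta)\,d\eta \ge \frac{\alpha_2 \varepsilon}{2n}$. Then $\int_{s_i}^{s_{i+2}} \left( \int_\eta^{s_{i+2}}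 \Upsilon(\eta,u)\,du \right) d\eta \;\ge\; \frac{\alpha_2 s}{4}\, \varepsilon^{1+2\nu}.$ -/
open MeasureTheory

set_option maxHeartbeats 1000000 in
theorem stmt_2 (s β Kβ α₂ ν : ℝ) (hs : 0 < s) (hβ : β ∈ Set.Ioo (0:ℝ) 1)
    (hK : 0 < Kβ) (hα₂ : 0 < α₂) (hν : 0 < ν) (hνβ : 1 < ν * β)
    (ε : ℝ) (hε : 0 < ε)
    (hε' : ε < min ((2:ℝ) ^ (-1 / ν))
      ((α₂ / (Kβ * (4:ℝ) ^ (β + 3) * s ^ (β + 1))) ^ (1 / (ν * β - 1))))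
    (n : ℕ) (hn : n = ⌊ε ^ (-ν)⌋₊) (i : ℕ) (hi : i ≤ n - 2)
    (Υ : ℝ → ℝ → ℝ) (hmeas : Measurable (Function.uncurry Υ))
    (hnonneg : ∀ η ∈ Set.Icc 0 s, ∀ lam ∈ Set.Icc 0 s, 0 ≤ Υ η lam)
    (hholder : ∀ η ∈ Set.Icc 0 s, ∀ x ∈ Set.Icc 0 s, ∀ y ∈ Set.Icc 0 s,
      |Υ η x - Υ η y| ≤ Kβ * |x - y| ^ β)
    (hdiag : IntegrableOn (fun η => Υ η η) (Set.Icc 0 s))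
    (hlow : α₂ * ε / (2 * n) ≤ ∫ η in ((i : ℝ) * s / n)..(((i : ℝ) + 1) * s / n), Υ η η) :
    α₂ * s / 4 * ε ^ (1 + 2 * ν) ≤
      ∫ η in ((i : ℝ) * s / n)..(((i : ℝ) + 2) * s / n),
        (∫ u in η..(((i : ℝ) + 2) * s / n), Υ η u) := by
  obtain ⟨hβ0, hβ1⟩ := hβ
  -- basic facts about n and ε
  have hεν2 : (2:ℝ) < ε ^ (-ν) := by
    have h1 : ε < (2:ℝ) ^ (-1/ν) := hε'.trans_le (min_le_left _ _)
    have h := Real.rpow_lt_rpow_of_neg hε h1 (neg_neg_of_pos hν)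
    rwa [← Real.rpow_mul (by norm_num), show (-1/ν)*(-ν) = 1 by field_simp,
      Real.rpow_one] at h
  have hn2 : 2 ≤ n := by
    rw [hn]; exact Nat.le_floor (by exact_mod_cast hεν2.le)
  have hn0 : (0:ℝ) < n := by exact_mod_cast Nat.lt_of_lt_of_le (by norm_num) hn2
  have hεp : (0:ℝ) < ε ^ ν := Real.rpow_pos_of_pos hε ν
  have hinv : ε ^ (-ν) = (ε ^ ν)⁻¹ := Real.rpow_neg hε.le ν
  have hnle : (n:ℝ) ≤ (ε ^ ν)⁻¹ := by
    rw [← hinv, hn]; exact Nat.floor_le (Real.rpow_nonneg hε.le _)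
  have hnmul : (n:ℝ) * ε ^ ν ≤ 1 := by
    have := mul_le_mul_of_nonneg_right hnle hεp.le
    rwa [inv_mul_cancel₀ hεp.ne'] at this
  have hlt2n : (ε ^ ν)⁻¹ < 2 * n := by
    rw [← hinv]
    calc ε ^ (-ν) < (⌊ε ^ (-ν)⌋₊ : ℝ) + 1 := Nat.lt_floor_add_one _
      _ = (n:ℝ) + 1 := by rw [hn]
      _ ≤ 2 * n := by
        have : (2:ℝ) ≤ (n:ℝ) := by exact_mod_cast hn2
        linarith
  have h2nmul : 1 < 2 * (n:ℝ) * ε ^ ν := by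
    have := mul_lt_mul_of_pos_right hlt2n hεp
    rwa [inv_mul_cancel₀ hεp.ne'] at this
  -- abbreviations
  set a := (i:ℝ) * s / n with ha
  set b1 := ((i:ℝ) + 1) * s / n with hb1
  set b2 := ((i:ℝ) + 2) * s / n with hb2
  set h := s / (n:ℝ) with hhd
  have hh0 : 0 < h := div_pos hs hn0
  have hab1 : b1 = a + h := by rw [ha, hb1, hhd]; ring
  have hab2 : b2 = a + h + h := by rw [ha, hb2, hhd]; ring
  have hh1 : s * ε ^ ν ≤ h := by
    rw [hhd, le_div_iff₀ hn0]
    linarith [mul_le_mul_of_nonneg_left hnmul hs.le]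
  have hh2 : h ≤ 2 * (s * ε ^ ν) := by
    rw [hhd, div_le_iff₀ hn0]
    linarith [mul_le_mul_of_nonneg_left h2nmul.le hs.le]
  have ha0 : 0 ≤ a := by positivity
  have hi2 : i + 2 ≤ n := by omega
  have hb2s : b2 ≤ s := by
    rw [hb2, div_le_iff₀ hn0]
    have h' : ((i:ℝ) + 2) ≤ (n:ℝ) := by exact_mod_cast hi2
    linarith [mul_le_mul_of_nonneg_right h' hs.le]
  have hsub : ∀ x, a ≤ x → x ≤ b2 → x ∈ Set.Icc (0:ℝ) s := fun x h1 h2 =>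
    ⟨ha0.trans h1, h2.trans hb2s⟩
  have hab1' : a ≤ b1 := by rw [hab1]; linarith
  have hb1b2 : b1 ≤ b2 := by rw [hab1, hab2]; linarith
  have hab2' : a ≤ b2 := hab1'.trans hb1b2
  have huIcc : Set.uIcc a b2 ⊆ Set.Icc 0 s := by
    rw [Set.uIcc_of_le hab2']
    exact fun x hx => hsub x hx.1 hx.2
  set C := Kβ * s ^ β with hC
  have hC0 : 0 ≤ C := by positivity
  -- bound on Υ
  have habs : ∀ η ∈ Set.Icc (0:ℝ) s, ∀ u ∈ Set.Icc (0:ℝ) s, |Υ η u| ≤ Υ η η + C := by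
    intro η hη u hu
    have h1 := hholder η hη u hu η hη
    have h2 : |u - η| ≤ s := by
      rw [abs_le]; constructor <;> [linarith [hη.2, hu.1]; linarith [hη.1, hu.2]]
    have h3 : Kβ * |u - η| ^ β ≤ C :=
      mul_le_mul_of_nonneg_left (Real.rpow_le_rpow (abs_nonneg _) h2 hβ0.le) hK.le
    rw [abs_of_nonneg (hnonneg η hη u hu)]
    have := le_abs_self (Υ η u - Υ η η)
    linarith
  -- interval integrability of slices
  have hslice0 : ∀ η ∈ Set.Icc (0:ℝ) s, IntegrableOn (Υ η) (Set.Icc 0 s) := by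
    intro η hη
    apply Integrable.mono' (g := fun _ => Υ η η + C)
      (integrableOn_const measure_Icc_lt_top.ne)
      (hmeas.of_uncurry_left.aestronglyMeasurable)
    rw [ae_restrict_iff' measurableSet_Icc]
    exact Filter.Eventually.of_forall fun u hu => habs η hη u hu
  have hsubU : ∀ c ∈ Set.Icc (0:ℝ) s, ∀ d ∈ Set.Icc (0:ℝ) s,
      Set.uIcc c d ⊆ Set.uIcc 0 s := by
    intro c hc d hd
    exact Set.uIcc_subset_uIcc (by rw [Set.uIcc_of_le hs.le]; exact hc)
      (by rw [Set.uIcc_of_le hs.le]; exact hd)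
  have hslice : ∀ η ∈ Set.Icc (0:ℝ) s, ∀ c ∈ Set.Icc (0:ℝ) s, ∀ d ∈ Set.Icc (0:ℝ) s,
      IntervalIntegrable (Υ η) volume c d := by
    intro η hη c hc d hd
    have h0s : IntervalIntegrable (Υ η) volume 0 s := by
      apply IntegrableOn.intervalIntegrable
      rw [Set.uIcc_of_le hs.le]; exact hslice0 η hη
    exact h0s.mono_set (hsubU c hc d hd)
  -- diagonal integrability on subintervals
  have hdiagII : ∀ c ∈ Set.Icc (0:ℝ) s, ∀ d ∈ Set.Icc (0:ℝ) s,
      IntervalIntegrable (fun η => Υ η η) volume c d := by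
    intro c hc d hd
    have h0s : IntervalIntegrable (fun η => Υ η η) volume 0 s := by
      apply IntegrableOn.intervalIntegrable
      rw [Set.uIcc_of_le hs.le]; exact hdiag
    exact h0s.mono_set (hsubU c hc d hd)
  -- the inner integral function
  set G := fun η => ∫ u in η..b2, Υ η u with hG
  -- measurability of G
  have hsetm : MeasurableSet {p : ℝ × ℝ | p.1 < p.2 ∧ p.2 ≤ b2} :=
    (measurableSet_lt measurable_fst measurable_snd).inter
      (measurableSet_le measurable_snd measurable_const)
  have hFm : Measurable (Function.uncurry fun η u =>
      if η < u ∧ u ≤ b2 then Υ η u else 0) := by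
    exact Measurable.ite hsetm hmeas measurable_const
  have hGm : StronglyMeasurable fun η => ∫ u, (if η < u ∧ u ≤ b2 then Υ η u else 0) :=
    hFm.stronglyMeasurable.integral_prod_right
  have hGeq : ∀ η, η ≤ b2 → G η = ∫ u, (if η < u ∧ u ≤ b2 then Υ η u else 0) := by
    intro η hη
    show (∫ u in η..b2, Υ η u) = _
    rw [intervalIntegral.integral_of_le hη, ← integral_indicator measurableSet_Ioc]
    congr 1
    ext u
    simp [Set.indicator_apply, Set.mem_Ioc]
  -- integrability of G on [a, b2]
  have hGint : IntervalIntegrable G volume a b2 := by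
    rw [intervalIntegrable_iff_integrableOn_Ioc_of_le hab2']
    apply Integrable.mono' (g := fun η => s * (Υ η η + C))
    · exact (((hdiag.mono_set (fun x hx => hsub x hx.1.le hx.2)).add
        (integrableOn_const measure_Ioc_lt_top.ne)).const_mul s)
    · apply ((hGm.aestronglyMeasurable).restrict).congr
      rw [Filter.EventuallyEq, ae_restrict_iff' measurableSet_Ioc]
      exact Filter.Eventually.of_forall fun η hη => (hGeq η hη.2).symm
    · rw [ae_restrict_iff' measurableSet_Ioc]
      apply Filter.Eventually.of_forall
      intro η hη
      have hηm : η ∈ Set.Icc (0:ℝ) s := hsub η hη.1.le hη.2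
      have hb : ∀ u ∈ Set.uIoc η b2, ‖Υ η u‖ ≤ Υ η η + C := by
        intro u hu
        rw [Set.uIoc_of_le hη.2] at hu
        exact habs η hηm u (hsub u (hη.1.le.trans hu.1.le) hu.2)
      calc ‖G η‖ ≤ (Υ η η + C) * |b2 - η| :=
            intervalIntegral.norm_integral_le_of_norm_le_const hb
        _ ≤ s * (Υ η η + C) := by
            have h1 : |b2 - η| ≤ s := by
              rw [abs_of_nonneg (by linarith [hη.2])]
              linarith [hηm.1, hb2s]
            have h2 : 0 ≤ Υ η η + C := le_trans (abs_nonneg _) (habs η hηm η hηm)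
            calc (Υ η η + C) * |b2 - η| ≤ (Υ η η + C) * s :=
                  mul_le_mul_of_nonneg_left h1 h2
              _ = s * (Υ η η + C) := mul_comm _ _
  have hGint1 : IntervalIntegrable G volume a b1 :=
    hGint.mono_set (Set.uIcc_subset_uIcc (by rw [Set.uIcc_of_le hab2']; exact ⟨le_refl a, hab2'⟩)
      (by rw [Set.uIcc_of_le hab2']; exact ⟨hab1', hb1b2⟩))
  have hGint2 : IntervalIntegrable G volume b1 b2 :=
    hGint.mono_set (Set.uIcc_subset_uIcc (by rw [Set.uIcc_of_le hab2']; exact ⟨hab1', hb1b2⟩)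
      (by rw [Set.uIcc_of_le hab2']; exact ⟨hab2', le_refl b2⟩))
  -- pointwise lower bound on [a, b1]
  have hpt : ∀ η ∈ Set.Icc a b1, h * Υ η η - h * (Kβ * h ^ β) ≤ G η := by
    intro η hη
    have hηm : η ∈ Set.Icc (0:ℝ) s := hsub η hη.1 (hη.2.trans hb1b2)
    have hm2 : η + h ≤ b2 := by rw [hab2]; linarith [hη.2, hab1 ▸ hη.2]
    have hmm : η + h ∈ Set.Icc (0:ℝ) s := hsub (η + h) (by linarith [hη.1]) hm2
    have hb2m : b2 ∈ Set.Icc (0:ℝ) s := hsub b2 hab2' le_rfl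
    have hsplit : G η = (∫ u in η..(η+h), Υ η u) + ∫ u in (η+h)..b2, Υ η u :=
      (intervalIntegral.integral_add_adjacent_intervals
        (hslice η hηm η hηm (η+h) hmm) (hslice η hηm (η+h) hmm b2 hb2m)).symm
    have h2nd : 0 ≤ ∫ u in (η+h)..b2, Υ η u := by
      apply intervalIntegral.integral_nonneg hm2
      intro u hu
      exact hnonneg η hηm u (hsub u (by linarith [hη.1, hu.1]) hu.2)
    have h1st : h * Υ η η - h * (Kβ * h ^ β) ≤ ∫ u in η..(η+h), Υ η u := by
      have hmono : ∫ u in η..(η+h), (Υ η η - Kβ * h ^ β) ≤ ∫ u in η..(η+h), Υ η u := by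
        apply intervalIntegral.integral_mono_on (by linarith)
          intervalIntegrable_const (hslice η hηm η hηm (η+h) hmm)
        intro u hu
        have hum : u ∈ Set.Icc (0:ℝ) s :=
          hsub u (by linarith [hη.1, hu.1]) (by linarith [hu.2, hm2])
        have h1 := hholder η hηm η hηm u hum
        have h2 : |η - u| ≤ h := by
          rw [abs_le]; constructor <;> [linarith [hu.2]; linarith [hu.1]]
        have h3 : Kβ * |η - u| ^ β ≤ Kβ * h ^ β :=
          mul_le_mul_of_nonneg_left (Real.rpow_le_rpow (abs_nonneg _) h2 hβ0.le) hK.le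
        have := le_abs_self (Υ η η - Υ η u)
        linarith
      calc h * Υ η η - h * (Kβ * h ^ β) = ∫ u in η..(η+h), (Υ η η - Kβ * h ^ β) := by
            rw [intervalIntegral.integral_const]; simp; ring
        _ ≤ _ := hmono
    linarith [hsplit ▸ (by linarith : h * Υ η η - h * (Kβ * h ^ β) ≤
        (∫ u in η..(η+h), Υ η u) + ∫ u in (η+h)..b2, Υ η u)]
  -- key numeric bound
  have hc : 0 < ν * β - 1 := by linarith
  have hX : 0 < α₂ / (Kβ * (4:ℝ) ^ (β + 3) * s ^ (β + 1)) := by positivity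
  have hεle : ε ^ (ν * β - 1) ≤ α₂ / (Kβ * (4:ℝ) ^ (β + 3) * s ^ (β + 1)) := by
    have h1 : ε < (α₂ / (Kβ * (4:ℝ) ^ (β + 3) * s ^ (β + 1))) ^ (1 / (ν * β - 1)) :=
      hε'.trans_le (min_le_right _ _)
    have h := Real.rpow_le_rpow hε.le h1.le hc.le
    rwa [← Real.rpow_mul hX.le, one_div_mul_cancel hc.ne', Real.rpow_one] at h
  have hεmul : ε ^ (ν * β) = ε ^ (ν * β - 1) * ε := by
    rw [show ν * β = (ν * β - 1) + 1 by ring, Real.rpow_add_one hε.ne']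
    ring_nf
  have hhb : h ^ β ≤ 2 ^ β * s ^ β * ε ^ (ν * β) := by
    calc h ^ β ≤ (2 * (s * ε ^ ν)) ^ β := Real.rpow_le_rpow hh0.le hh2 hβ0.le
      _ = 2 ^ β * (s ^ β * (ε ^ ν) ^ β) := by
          rw [Real.mul_rpow (by norm_num) (by positivity), Real.mul_rpow hs.le hεp.le]
      _ = 2 ^ β * s ^ β * ε ^ (ν * β) := by
          rw [← Real.rpow_mul hε.le]; ring
  have h24 : (2:ℝ) ^ β * 4 ≤ (4:ℝ) ^ (β + 3) := by
    have h2 : (2:ℝ) ^ β ≤ 4 ^ β := Real.rpow_le_rpow (by norm_num) (by norm_num) hβ0.le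
    have h3 : (4:ℝ) ^ (β + 3) = 4 ^ β * 64 := by
      rw [Real.rpow_add (by norm_num), show (3:ℝ) = ((3:ℕ):ℝ) by norm_num,
        Real.rpow_natCast]
      norm_num
    rw [h3]
    have h4 : (2:ℝ) ^ β * 4 ≤ 2 ^ β * 64 :=
      mul_le_mul_of_nonneg_left (by norm_num)
        (Real.rpow_nonneg (by norm_num : (0:ℝ) ≤ 2) β)
    linarith [mul_le_mul_of_nonneg_right h2 (by norm_num : (0:ℝ) ≤ 64)]
  have hsb1 : s ^ (β + 1) = s ^ β * s := Real.rpow_add_one hs.ne' β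
  have hkey : Kβ * s * h ^ β ≤ α₂ * ε / 4 := by
    have h1 : Kβ * s * h ^ β ≤ Kβ * s * (2 ^ β * s ^ β * ε ^ (ν * β)) :=
      mul_le_mul_of_nonneg_left hhb (by positivity)
    have h2 : Kβ * s * (2 ^ β * s ^ β * ε ^ (ν * β))
        = Kβ * 2 ^ β * s ^ (β + 1) * (ε ^ (ν * β - 1) * ε) := by
      rw [hsb1, ← hεmul]; ring
    have h3 : Kβ * 2 ^ β * s ^ (β + 1) * (ε ^ (ν * β - 1) * ε)
        ≤ Kβ * 2 ^ β * s ^ (β + 1) *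
          ((α₂ / (Kβ * (4:ℝ) ^ (β + 3) * s ^ (β + 1))) * ε) := by
      apply mul_le_mul_of_nonneg_left _ (by positivity)
      exact mul_le_mul_of_nonneg_right hεle hε.le
    have h4p : (0:ℝ) < (4:ℝ) ^ (β + 3) := by positivity
    have hsp : (0:ℝ) < s ^ (β + 1) := by positivity
    have h2p : (0:ℝ) < (2:ℝ) ^ β := by positivity
    have h4 : Kβ * 2 ^ β * s ^ (β + 1) *
          ((α₂ / (Kβ * (4:ℝ) ^ (β + 3) * s ^ (β + 1))) * ε)
        = (2:ℝ) ^ β * 4 / (4:ℝ) ^ (β + 3) * (α₂ * ε / 4) := by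
      field_simp
    have h5 : (2:ℝ) ^ β * 4 / (4:ℝ) ^ (β + 3) * (α₂ * ε / 4) ≤ α₂ * ε / 4 := by
      have : (2:ℝ) ^ β * 4 / (4:ℝ) ^ (β + 3) ≤ 1 := by
        rw [div_le_one h4p]; exact h24
      exact mul_le_of_le_one_left (by positivity) this
    linarith [h1, h2 ▸ h3, h4 ▸ h5]
  -- assemble
  have hIlow := hlow
  have step1 : (∫ η in a..b1, G η) + ∫ η in b1..b2, G η = ∫ η in a..b2, G η :=
    intervalIntegral.integral_add_adjacent_intervals hGint1 hGint2
  have step2 : 0 ≤ ∫ η in b1..b2, G η := by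
    apply intervalIntegral.integral_nonneg hb1b2
    intro η hη
    have hηm : η ∈ Set.Icc (0:ℝ) s := hsub η (hab1'.trans hη.1) hη.2
    apply intervalIntegral.integral_nonneg hη.2
    intro u hu
    exact hnonneg η hηm u (hsub u (by linarith [hη.1, hu.1, hab1']) hu.2)
  have step3 : ∫ η in a..b1, (h * Υ η η - h * (Kβ * h ^ β)) ≤ ∫ η in a..b1, G η := by
    apply intervalIntegral.integral_mono_on hab1' _ hGint1 hpt
    exact ((hdiagII a ⟨ha0, hab2'.trans hb2s⟩ b1 ⟨ha0.trans hab1', hb1b2.trans hb2s⟩).const_mul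
      h).sub intervalIntegrable_const
  have step4 : ∫ η in a..b1, (h * Υ η η - h * (Kβ * h ^ β))
      = h * (∫ η in a..b1, Υ η η) - h * (h * (Kβ * h ^ β)) := by
    rw [intervalIntegral.integral_sub
      ((hdiagII a ⟨ha0, hab2'.trans hb2s⟩ b1 ⟨ha0.trans hab1', hb1b2.trans hb2s⟩).const_mul h)
      intervalIntegrable_const,
      intervalIntegral.integral_const_mul, intervalIntegral.integral_const]
    rw [hab1, smul_eq_mul]
    ring
  -- final arithmetic
  have hεsplit : ε ^ (1 + 2 * ν) = ε * ε ^ ν * ε ^ ν := by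
    rw [show 1 + 2 * ν = 1 + (ν + ν) by ring, Real.rpow_add hε, Real.rpow_add hε,
      Real.rpow_one]
    ring
  have hqn : ε ^ ν ≤ 1 / (n:ℝ) := by
    rw [le_div_iff₀ hn0]; linarith [mul_comm (ε ^ ν) (n:ℝ)]
  have hbig : α₂ * s / 4 * ε ^ (1 + 2 * ν) ≤ h * (∫ η in a..b1, Υ η η) - h * (h * (Kβ * h ^ β)) := by
    have e1 : h * (h * (Kβ * h ^ β)) ≤ h * (α₂ * ε / (4 * n)) := by
      apply mul_le_mul_of_nonneg_left _ hh0.le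
      have : h * (Kβ * h ^ β) = Kβ * s * h ^ β / n := by rw [hhd]; ring
      rw [this, div_le_div_iff₀ hn0 (by positivity : (0:ℝ) < 4 * n)]
      linarith [mul_le_mul_of_nonneg_right hkey
        (by positivity : (0:ℝ) ≤ 4 * (n:ℝ))]
    have e2 : h * (α₂ * ε / (2 * n)) ≤ h * (∫ η in a..b1, Υ η η) :=
      mul_le_mul_of_nonneg_left hIlow hh0.le
    have e3 : α₂ * s / 4 * ε ^ (1 + 2 * ν) ≤ h * (α₂ * ε / (4 * n)) := by
      rw [hεsplit]
      have f1 : α₂ * ε / (4 * n) = α₂ * ε / 4 * (1 / n) := by ring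
      have f2 : α₂ * ε / 4 * (ε ^ ν) ≤ α₂ * ε / 4 * (1 / n) :=
        mul_le_mul_of_nonneg_left hqn (by positivity)
      have f3 : s * ε ^ ν * (α₂ * ε / 4 * ε ^ ν) ≤ h * (α₂ * ε / 4 * (1 / n)) := by
        apply mul_le_mul (by linarith [hh1]) f2 (by positivity) hh0.le
      calc α₂ * s / 4 * (ε * ε ^ ν * ε ^ ν) = s * ε ^ ν * (α₂ * ε / 4 * ε ^ ν) := by ring
        _ ≤ h * (α₂ * ε / 4 * (1 / n)) := f3
        _ = h * (α₂ * ε / (4 * n)) := by rw [← f1]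
    have e4 : h * (α₂ * ε / (2 * n)) = 2 * (h * (α₂ * ε / (4 * n))) := by ring
    linarith [e1, e2, e3, e4]
  calc α₂ * s / 4 * ε ^ (1 + 2 * ν)
      ≤ h * (∫ η in a..b1, Υ η η) - h * (h * (Kβ * h ^ β)) := hbig
    _ = ∫ η in a..b1, (h * Υ η η - h * (Kβ * h ^ β)) := step4.symm
    _ ≤ ∫ η in a..b1, G η := step3
    _ ≤ (∫ η in a..b1, G η) + ∫ η in b1..b2, G η := by linarith
    _ = ∫ η in a..b2, G η := step1
end

section
/- Let $0 \le a < b$, $\beta \in (0,1)$, $K'_\beta > 0$, $\mathcal{K} > 0$, and let $m \ge 1$ be an integer. Let $Y : [a,b] \times [a,b] \to \mathbb{R}$ be measurable with $\lambda \mapsto Y(\eta,\lambda)$ $\beta$-H\"older continuous with constant $K'_\beta$ for every $\eta$ and with $\eta \mapsto Y(\eta,\eta)^2$ integrable; let $\Psi^j : [a,b] \times [a,b] \to \mathbb{R}$, $1 \le j \le m$, be measurable with $|\Psi^j| \le \mathcal{K}$; and let $\Theta^{j,k} : [a,b] \to \mathbb{R}$, $1 \le j,k \le m$, be measurable with $|\Theta^{j,k}|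 \le \mathcal{K}$. Then $\left| 4 \sum_{j,k=1}^m \int_a^b \left( \int_\eta^b Y(\eta,u) \Psi^j(\eta,u)\, du \right) \left( \int_\eta^b Y(\eta,u) \Psi^k(\eta,u)\, du \right) \Theta^{j,k}(\eta)\, d\eta \right| \;\le\; 8 m^2 \mathcal{K}^3 (b-a)^2 \int_a^b Y(\eta,\eta)^2\, d\eta \;+\; 8 m^2 \mathcal{K}^3 (K'_\beta)^2 (b-a)^{2\beta+3}.$ -/
open MeasureTheory

theorem stmt_6 (a b β K'β K : ℝ) (ha : 0 ≤ a) (hab : a < b)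
    (hβ : β ∈ Set.Ioo (0:ℝ) 1) (hK' : 0 < K'β) (hK : 0 < K)
    (m : ℕ) (hm : 1 ≤ m)
    (Y : ℝ → ℝ → ℝ) (hYmeas : Measurable (Function.uncurry Y))
    (hholder : ∀ η ∈ Set.Icc a b, ∀ x ∈ Set.Icc a b, ∀ y ∈ Set.Icc a b,
      |Y η x - Y η y| ≤ K'β * |x - y| ^ β)
    (hdiag : IntegrableOn (fun η => (Y η η) ^ 2) (Set.Icc a b))
    (Ψ : Fin m → ℝ → ℝ → ℝ) (hΨmeas : ∀ j, Measurable (Function.uncurry (Ψ j)))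
    (hΨbound : ∀ j x y, |Ψ j x y| ≤ K)
    (Θ : Fin m → Fin m → ℝ → ℝ) (hΘmeas : ∀ j k, Measurable (Θ j k))
    (hΘbound : ∀ j k x, |Θ j k x| ≤ K) :
    |4 * ∑ j, ∑ k, ∫ η in a..b,
        (∫ u in η..b, Y η u * Ψ j η u) * (∫ u in η..b, Y η u * Ψ k η u) * Θ j k η| ≤
      8 * (m : ℝ) ^ 2 * K ^ 3 * (b - a) ^ 2 * (∫ η in a..b, (Y η η) ^ 2)
        + 8 * (m : ℝ) ^ 2 * K ^ 3 * K'β ^ 2 * (b - a) ^ (2 * β + 3) := by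
  have ht : (0:ℝ) < b - a := by linarith
  set C : ℝ := K'β * (b - a) ^ β with hC
  have hCpos : 0 < C := mul_pos hK' (Real.rpow_pos_of_pos ht β)
  set g : ℝ → ℝ := fun η => 2 * K ^ 3 * (b - a) ^ 2 * ((Y η η) ^ 2 + C ^ 2) with hg
  -- integrability of g
  have hYI : IntervalIntegrable (fun η => (Y η η) ^ 2) volume a b := by
    have := hdiag.mono_set (by rw [Set.uIcc_of_le hab.le] : Set.uIcc a b ⊆ Set.Icc a b)
    exact this.intervalIntegrable
  have hgI : IntervalIntegrable g volume a b :=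
    ((hYI.add intervalIntegrable_const).const_mul _)
  -- inner integral bound
  have hinner : ∀ η ∈ Set.Ioc a b, ∀ j,
      |∫ u in η..b, Y η u * Ψ j η u| ≤ K * (b - a) * (|Y η η| + C) := by
    intro η hη j
    have hηab : η ∈ Set.Icc a b := Set.mem_Icc.2 ⟨hη.1.le, hη.2⟩
    have hb : ‖∫ u in η..b, Y η u * Ψ j η u‖ ≤ ((|Y η η| + C) * K) * |b - η| := by
      apply intervalIntegral.norm_integral_le_of_norm_le_const
      intro x hx
      rw [Set.uIoc_of_le hη.2] at hx
      have hxab : x ∈ Set.Icc a b := Set.mem_Icc.2 ⟨le_trans hη.1.le hx.1.le, hx.2⟩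
      have h1 : |Y η x| ≤ |Y η η| + C := by
        have h2 : |Y η x - Y η η| ≤ K'β * |x - η| ^ β := hholder η hηab x hxab η hηab
        have h3 : |x - η| ^ β ≤ (b - a) ^ β := by
          apply Real.rpow_le_rpow (abs_nonneg _) _ hβ.1.le
          rw [abs_le]
          constructor
          · linarith [hx.1.le, hηab.1, hxab.2]
          · linarith [hx.2, hηab.1]
        have h4 : K'β * |x - η| ^ β ≤ C := by
          rw [hC]; exact mul_le_mul_of_nonneg_left h3 hK'.le
        calc |Y η x| ≤ |Y η η| + |Y η x - Y η η| := by
              have := abs_add_le (Y η η) (Y η x - Y η η); simpa using this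
          _ ≤ |Y η η| + C := by linarith
      rw [Real.norm_eq_abs, abs_mul]
      exact mul_le_mul h1 (hΨbound j η x) (abs_nonneg _) (by positivity)
    rw [Real.norm_eq_abs] at hb
    have : |b - η| = b - η := abs_of_nonneg (by linarith [hη.2])
    rw [this] at hb
    have hA : (0:ℝ) ≤ |Y η η| + C := by positivity
    nlinarith [mul_nonneg (mul_nonneg hK.le hA) (show (0:ℝ) ≤ η - a by linarith [hη.1])]
  -- per-(j,k) bound
  have hkey : ∀ j k, |∫ η in a..b,
      (∫ u in η..b, Y η u * Ψ j η u) * (∫ u in η..b, Y η u * Ψ k η u) * Θ j k η|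
      ≤ ∫ η in a..b, g η := by
    intro j k
    have h := intervalIntegral.norm_integral_le_abs_of_norm_le (μ := volume) (a := a) (b := b)
      (f := fun η => (∫ u in η..b, Y η u * Ψ j η u) * (∫ u in η..b, Y η u * Ψ k η u) * Θ j k η)
      (g := g) ?_ hgI
    · rw [Real.norm_eq_abs] at h
      refine h.trans ?_
      have hgnn : (0:ℝ) ≤ ∫ η in a..b, g η := by
        apply intervalIntegral.integral_nonneg hab.le
        intro u _; positivity
      rw [abs_of_nonneg hgnn]
    · rw [Set.uIoc_of_le hab.le]
      filter_upwards [ae_restrict_mem measurableSet_Ioc] with η hη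
      have h1 := hinner η hη j
      have h2 := hinner η hη k
      have h3 := hΘbound j k η
      rw [Real.norm_eq_abs, abs_mul, abs_mul]
      have hA : (0:ℝ) ≤ |Y η η| + C := by positivity
      have hL : (0:ℝ) ≤ K * (b - a) * (|Y η η| + C) := by positivity
      calc |∫ u in η..b, Y η u * Ψ j η u| * |∫ u in η..b, Y η u * Ψ k η u| * |Θ j k η|
          ≤ (K * (b - a) * (|Y η η| + C)) * (K * (b - a) * (|Y η η| + C)) * K := by
            apply mul_le_mul _ h3 (abs_nonneg _) (by positivity)
            exact mul_le_mul h1 h2 (abs_nonneg _) hL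
        _ ≤ g η := by
            show _ ≤ 2 * K ^ 3 * (b - a) ^ 2 * ((Y η η) ^ 2 + C ^ 2)
            have hP : (0:ℝ) ≤ K ^ 3 * (b - a) ^ 2 := by positivity
            have hA2 : (|Y η η| + C) ^ 2 ≤ 2 * ((Y η η) ^ 2 + C ^ 2) := by
              nlinarith [sq_nonneg (|Y η η| - C), sq_abs (Y η η)]
            calc K * (b - a) * (|Y η η| + C) * (K * (b - a) * (|Y η η| + C)) * K
                = K ^ 3 * (b - a) ^ 2 * (|Y η η| + C) ^ 2 := by ring
              _ ≤ K ^ 3 * (b - a) ^ 2 * (2 * ((Y η η) ^ 2 + C ^ 2)) :=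
                mul_le_mul_of_nonneg_left hA2 hP
              _ = 2 * K ^ 3 * (b - a) ^ 2 * ((Y η η) ^ 2 + C ^ 2) := by ring
  -- sum it up
  set S := ∑ j : Fin m, ∑ k : Fin m, ∫ η in a..b,
      (∫ u in η..b, Y η u * Ψ j η u) * (∫ u in η..b, Y η u * Ψ k η u) * Θ j k η with hS
  have hSb : |S| ≤ (m:ℝ) ^ 2 * ∫ η in a..b, g η := by
    calc |S| ≤ ∑ j : Fin m, |∑ k : Fin m, ∫ η in a..b,
          (∫ u in η..b, Y η u * Ψ j η u) * (∫ u in η..b, Y η u * Ψ k η u) * Θ j k η| :=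
        Finset.abs_sum_le_sum_abs _ _
      _ ≤ ∑ _j : Fin m, (m:ℝ) * ∫ η in a..b, g η := by
          apply Finset.sum_le_sum
          intro j _
          calc |∑ k : Fin m, ∫ η in a..b,
              (∫ u in η..b, Y η u * Ψ j η u) * (∫ u in η..b, Y η u * Ψ k η u) * Θ j k η|
              ≤ ∑ k : Fin m, |∫ η in a..b,
                (∫ u in η..b, Y η u * Ψ j η u) * (∫ u in η..b, Y η u * Ψ k η u) * Θ j k η| :=
              Finset.abs_sum_le_sum_abs _ _
            _ ≤ ∑ _k : Fin m, ∫ η in a..b, g η := Finset.sum_le_sum fun k _ => hkey j k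
            _ = (m:ℝ) * ∫ η in a..b, g η := by simp [Finset.sum_const]
      _ = (m:ℝ) ^ 2 * ∫ η in a..b, g η := by simp [Finset.sum_const]; ring
  -- compute ∫ g
  have hgint : ∫ η in a..b, g η
      = 2 * K ^ 3 * (b - a) ^ 2 * ((∫ η in a..b, (Y η η) ^ 2) + (b - a) * C ^ 2) := by
    rw [hg]
    rw [intervalIntegral.integral_const_mul,
      intervalIntegral.integral_add hYI intervalIntegrable_const,
      intervalIntegral.integral_const]
    simp [smul_eq_mul]
  -- rpow algebra
  have hrpow : (b - a) ^ (2 * β + 3) = ((b - a) ^ β) ^ 2 * (b - a) ^ 3 := by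
    rw [Real.rpow_add ht]
    congr 1
    · rw [← Real.rpow_natCast ((b - a) ^ β) 2, ← Real.rpow_mul ht.le]
      norm_num [mul_comm]
    · rw [← Real.rpow_natCast (b - a) 3]; norm_num
  have hfinal : 8 * (m:ℝ) ^ 2 * K ^ 3 * K'β ^ 2 * (b - a) ^ (2 * β + 3)
      = 8 * (m:ℝ) ^ 2 * K ^ 3 * ((b - a) ^ 2 * ((b - a) * C ^ 2)) := by
    rw [hrpow, hC]; ring
  rw [abs_mul]
  have h4 : |(4:ℝ)| = 4 := by norm_num
  rw [h4]
  calc 4 * |S| ≤ 4 * ((m:ℝ) ^ 2 * ∫ η in a..b, g η) := by linarith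
    _ = 8 * (m:ℝ) ^ 2 * K ^ 3 * (b - a) ^ 2 * (∫ η in a..b, (Y η η) ^ 2)
        + 8 * (m:ℝ) ^ 2 * K ^ 3 * ((b - a) ^ 2 * ((b - a) * C ^ 2)) := by
      rw [hgint]; ring
    _ = _ := by rw [hfinal]
end
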